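/- Let G = U₁U₂ be an internal central product of subgroups U₁ and U₂, and H ≤ G. Then H is subnormal in G of defect at most r if and only if the iterated commutator subgroup [Uᵢ, H, …, H] (with H appearing r times) is contained in Uᵢ ∩ H for i = 1, 2. -/

import Mathlib

open scoped commutatorElement

/-- `H` is subnormal in `G` with a chain of length at most `r`. -/
def SubnormalOfDefectLE {G : Type*} [Group G] (H : Subgroup G) (r : ℕ) : Prop :=
  ∃ c : ℕ → Subgroup G, c 0 = H ∧ c r = ⊤ ∧
    ∀ i < r, c i ≤ c (i + 1) ∧ ((c i).subgroupOf (c (i + 1))).Normal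

/-- Left-normed iterated commutator `[U, H, …, H]` with `H` appearing `n` times. -/
def iterComm {G : Type*} [Group G] (U H : Subgroup G) : ℕ → Subgroup G
  | 0 => U
  | n + 1 => ⁅iterComm U H n, H⁆

lemma iterComm_zero {G : Type*} [Group G] (U H : Subgroup G) : iterComm U H 0 = U := rfl

lemma iterComm_succ {G : Type*} [Group G] (U H : Subgroup G) (n : ℕ) :
    iterComm U H (n + 1) = ⁅iterComm U H n, H⁆ := rfl

lemma iterComm_le_self {G : Type*} [Group G] {U : Subgroup G} (hU : U.Normal)
    (H : Subgroup G) : ∀ n, iterComm U H n ≤ U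
  | 0 => le_rfl
  | n + 1 => by
    rw [iterComm_succ]
    refine Subgroup.commutator_le.mpr fun x hx h _ => ?_
    have hx' : x ∈ U := iterComm_le_self hU H n hx
    have : ⁅x, h⁆ = x * (h * x⁻¹ * h⁻¹) := by group
    rw [this]
    exact mul_mem hx' (hU.conj_mem _ (inv_mem hx') h)

lemma iterComm_mono {G : Type*} [Group G] {U V : Subgroup G} (h : U ≤ V)
    (H : Subgroup G) : ∀ n, iterComm U H n ≤ iterComm V H n
  | 0 => h
  | n + 1 => Subgroup.commutator_mono (iterComm_mono h H n) le_rfl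

lemma commutator_le_sup {G : Type*} [Group G] (A B : Subgroup G) : ⁅A, B⁆ ≤ A ⊔ B :=
  Subgroup.commutator_le.mpr fun a ha b hb => by
    rw [commutatorElement_def]
    exact mul_mem (mul_mem (mul_mem (Subgroup.mem_sup_left ha) (Subgroup.mem_sup_right hb))
      (inv_mem (Subgroup.mem_sup_left ha))) (inv_mem (Subgroup.mem_sup_right hb))

/-- Key normalizer lemma for the central-product situation. -/
lemma conj_helper {G : Type*} [Group G] (U V H A B : Subgroup G)
    (hVn : V.Normal) (hcomm : ∀ u ∈ U, ∀ v ∈ V, Commute u v)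
    (hA : A ≤ U) (hB : B ≤ V) :
    A ≤ Subgroup.normalizer ((H ⊔ ⁅A, H⁆ ⊔ ⁅B, H⁆ : Subgroup G) : Set G) := by
  set K := H ⊔ ⁅A, H⁆ ⊔ ⁅B, H⁆ with hK
  have hHK : H ≤ K := le_trans le_sup_left le_sup_left
  have hAK : ⁅A, H⁆ ≤ K := le_trans le_sup_right le_sup_left
  have hBK : ⁅B, H⁆ ≤ K := le_sup_right
  have key : ∀ g ∈ A, ∀ x ∈ K, g * x * g⁻¹ ∈ K := by
    intro g hg
    have hle : K ≤ K.comap ((MulAut.conj g).toMonoidHom) := by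
      rw [hK]
      refine sup_le (sup_le ?_ ?_) ?_
      · intro h hh
        simp only [Subgroup.mem_comap, MulEquiv.coe_toMonoidHom, MulAut.conj_apply]
        have h1 : g * h * g⁻¹ = ⁅g, h⁆ * h := by group
        rw [h1]
        exact mul_mem (hAK (Subgroup.commutator_mem_commutator hg hh)) (hHK hh)
      · refine Subgroup.commutator_le.mpr fun x hx h hh => ?_
        simp only [Subgroup.mem_comap, MulEquiv.coe_toMonoidHom, MulAut.conj_apply]
        have h1 : g * ⁅x, h⁆ * g⁻¹ = ⁅g * x, h⁆ * ⁅g, h⁆⁻¹ := by group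
        rw [h1]
        exact mul_mem (hAK (Subgroup.commutator_mem_commutator (mul_mem hg hx) hh))
          (inv_mem (hAK (Subgroup.commutator_mem_commutator hg hh)))
      · refine Subgroup.commutator_le.mpr fun y hy h hh => ?_
        simp only [Subgroup.mem_comap, MulEquiv.coe_toMonoidHom, MulAut.conj_apply]
        have hyV : ⁅y, h⁆ ∈ V := by
          have h1 : ⁅y, h⁆ = y * (h * y⁻¹ * h⁻¹) := by group
          rw [h1]
          exact mul_mem (hB hy) (hVn.conj_mem _ (inv_mem (hB hy)) h)
        have hcz : Commute g ⁅y, h⁆ := hcomm g (hA hg) _ hyV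
        rw [hcz.eq, mul_inv_cancel_right]
        exact hBK (Subgroup.commutator_mem_commutator hy hh)
    intro x hx
    exact hle hx
  intro g hg
  rw [Subgroup.mem_normalizer_iff]
  intro x
  constructor
  · exact fun hx => key g hg x hx
  · intro hx
    have := key g⁻¹ (inv_mem hg) _ hx
    simpa [mul_assoc] using this

theorem stmt_9 {G : Type*} [Group G] (U₁ U₂ : Subgroup G)
    (hprod : ∀ g : G, ∃ u ∈ U₁, ∃ v ∈ U₂, g = u * v)
    (hcomm : ⁅U₁, U₂⁆ = (⊥ : Subgroup G)) (H : Subgroup G) (r : ℕ) :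
    SubnormalOfDefectLE H r ↔
      (iterComm U₁ H r ≤ U₁ ⊓ H ∧ iterComm U₂ H r ≤ U₂ ⊓ H) := by
  -- elementwise commuting
  have hcm : ∀ u ∈ U₁, ∀ v ∈ U₂, Commute u v := by
    intro u hu v hv
    have : ⁅u, v⁆ ∈ (⊥ : Subgroup G) := hcomm ▸ Subgroup.commutator_mem_commutator hu hv
    rw [Subgroup.mem_bot] at this
    exact commutatorElement_eq_one_iff_commute.mp this
  -- U₁ and U₂ are normal
  have hU₁n : U₁.Normal := by
    refine ⟨fun x hx g => ?_⟩
    obtain ⟨u, hu, v, hv, rfl⟩ := hprod g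
    have hvx : Commute v x := (hcm x hx v hv).symm
    have e : u * v * x * (u * v)⁻¹ = u * (v * x * v⁻¹) * u⁻¹ := by group
    rw [e, hvx.eq, mul_inv_cancel_right]
    exact U₁.mul_mem (U₁.mul_mem hu hx) (inv_mem hu)
  have hU₂n : U₂.Normal := by
    refine ⟨fun x hx g => ?_⟩
    obtain ⟨u, hu, v, hv, rfl⟩ := hprod g
    have hw : v * x * v⁻¹ ∈ U₂ := U₂.mul_mem (U₂.mul_mem hv hx) (inv_mem hv)
    have h1 : Commute u (v * x * v⁻¹) := hcm u hu _ hw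
    have e : u * v * x * (u * v)⁻¹ = u * (v * x * v⁻¹) * u⁻¹ := by group
    rw [e, h1.eq, mul_inv_cancel_right]
    exact hw
  have htop : U₁ ⊔ U₂ = ⊤ := by
    rw [eq_top_iff]
    intro g _
    obtain ⟨u, hu, v, hv, rfl⟩ := hprod g
    exact mul_mem (Subgroup.mem_sup_left hu) (Subgroup.mem_sup_right hv)
  constructor
  · -- forward direction
    rintro ⟨c, hc0, hcr, hstep⟩
    have hH : ∀ j, j ≤ r → H ≤ c j := by
      intro j
      induction j with
      | zero => intro _; rw [hc0]
      | succ k ih => intro hk; exact (ih (by omega)).trans (hstep k (by omega)).1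
    have hconj : ∀ j, j < r → ∀ g ∈ c (j + 1), ∀ x ∈ c j, g * x * g⁻¹ ∈ c j := by
      intro j hj g hg x hx
      have hnorm := (hstep j hj).2
      have hxle : x ∈ c (j + 1) := (hstep j hj).1 hx
      have := hnorm.conj_mem ⟨x, hxle⟩ (by rwa [Subgroup.mem_subgroupOf]) ⟨g, hg⟩
      rw [Subgroup.mem_subgroupOf] at this
      simpa using this
    have key : ∀ k, k ≤ r → ∀ U : Subgroup G, iterComm U H k ≤ c (r - k) := by
      intro k
      induction k with
      | zero =>
        intro _ U
        rw [Nat.sub_zero, hcr, iterComm_zero]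
        exact le_top
      | succ k ih =>
        intro hk U
        have hj : r - k = (r - (k + 1)) + 1 := by omega
        rw [iterComm_succ]
        refine Subgroup.commutator_le.mpr fun g hg h hh => ?_
        have hg' : g ∈ c ((r - (k + 1)) + 1) := by
          rw [← hj]; exact ih (by omega) U hg
        have hh' : h ∈ c (r - (k + 1)) := hH _ (by omega) hh
        have hco : g * h * g⁻¹ ∈ c (r - (k + 1)) :=
          hconj _ (by omega) g hg' h hh'
        have e : ⁅g, h⁆ = (g * h * g⁻¹) * h⁻¹ := by group
        rw [e]
        exact mul_mem hco (inv_mem hh')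
    have h1 := key r le_rfl U₁
    have h2 := key r le_rfl U₂
    rw [Nat.sub_self, hc0] at h1 h2
    exact ⟨le_inf (iterComm_le_self hU₁n H r) h1, le_inf (iterComm_le_self hU₂n H r) h2⟩
  · -- backward direction
    rintro ⟨h1, h2⟩
    refine ⟨fun i => H ⊔ iterComm U₁ H (r - i) ⊔ iterComm U₂ H (r - i), ?_, ?_, ?_⟩
    · dsimp only
      rw [Nat.sub_zero, sup_assoc]
      exact sup_eq_left.mpr (sup_le (h1.trans inf_le_right) (h2.trans inf_le_right))
    · dsimp only
      rw [Nat.sub_self, iterComm_zero, iterComm_zero, sup_assoc, htop, sup_top_eq]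
    · intro i hi
      dsimp only
      have hj : r - i = (r - (i + 1)) + 1 := by omega
      set n := r - (i + 1) with hn
      rw [hj, iterComm_succ, iterComm_succ]
      have hA : iterComm U₁ H n ≤ U₁ := iterComm_le_self hU₁n H n
      have hB : iterComm U₂ H n ≤ U₂ := iterComm_le_self hU₂n H n
      constructor
      · refine sup_le (sup_le ?_ ?_) ?_
        · exact le_trans le_sup_left le_sup_left
        · exact (commutator_le_sup _ _).trans (sup_le
            (le_trans le_sup_right le_sup_left) (le_trans le_sup_left le_sup_left))
        · exact (commutator_le_sup _ _).trans (sup_le le_sup_right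
            (le_trans le_sup_left le_sup_left))
      · -- normality
        have hN : H ⊔ iterComm U₁ H n ⊔ iterComm U₂ H n ≤
            Subgroup.normalizer ((H ⊔ ⁅iterComm U₁ H n, H⁆ ⊔ ⁅iterComm U₂ H n, H⁆ : Subgroup G) : Set G) := by
          refine sup_le (sup_le ?_ ?_) ?_
          · exact le_trans (le_trans le_sup_left le_sup_left) Subgroup.le_normalizer
          · exact conj_helper U₁ U₂ H _ _ hU₂n hcm hA hB
          · have := conj_helper U₂ U₁ H (iterComm U₂ H n) (iterComm U₁ H n) hU₁n
              (fun v hv u hu => (hcm u hu v hv).symm) hB hA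
            rwa [sup_right_comm] at this
        refine ⟨fun x hx g => ?_⟩
        rw [Subgroup.mem_subgroupOf] at hx ⊢
        have hg := hN g.2
        rw [Subgroup.mem_normalizer_iff] at hg
        simpa using (hg (x : G)).mp hx
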